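/- Let $f = (f_1,\dots,f_N)$ be a triangular tuple of polynomials over a field $k$ such that $f_1,\dots,f_N$ are algebraically independent over $k$. For each $n \ge 1$ define $\deg(f^{\circ n}) := \max_{1 \le j \le N} \operatorname{totalDegree}\big((f^{\circ n})_j\big)$, the maximum of the total degrees of the components of the $n$-fold self-composition. Then the limit $\lim_{n\to\infty} \big(\deg(f^{\circ n})\big)^{1/n}$ exists and is equal to $\max_{1 \le i \le N} \deg_{x_i} f_i$. -/

import Mathlib

open MvPolynomial

/-- The `n`-fold self-composition of a tuple of multivariate polynomials:
`(f^∘0)ᵢ = Xᵢ` and `(f^∘(n+1))ⱼ = fⱼ((f^∘n)₁, …, (f^∘n)_N)`. -/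
noncomputable def iterComp {k : Type*} [CommSemiring k] {N : ℕ}
    (f : Fin N → MvPolynomial (Fin N) k) : ℕ → Fin N → MvPolynomial (Fin N) k
  | 0 => fun i => X i
  | n + 1 => fun i => bind₁ (iterComp f n) (f i)

section Aux
variable {k : Type*} [Field k] {N : ℕ}

lemma iterComp_succ (f : Fin N → MvPolynomial (Fin N) k) (n : ℕ) (i : Fin N) :
    iterComp f (n+1) i = aeval (iterComp f n) (f i) := rfl

lemma iterComp_indep (f : Fin N → MvPolynomial (Fin N) k)
    (hfind : AlgebraicIndependent k f) (n : ℕ) :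
    AlgebraicIndependent k (iterComp f n) := by
  induction n with
  | zero => exact MvPolynomial.algebraicIndependent_X _ _
  | succ n ih =>
    rw [algebraicIndependent_iff_injective_aeval] at *
    have : (aeval (iterComp f (n+1)) : MvPolynomial (Fin N) k →ₐ[k] _)
        = (aeval (iterComp f n)).comp (aeval f) := by
      rw [comp_aeval]; rfl
    rw [this]
    exact ih.comp hfind

lemma degreeOf_eq_zero_iff' {p : MvPolynomial (Fin N) k} {j : Fin N} :
    degreeOf j p = 0 ↔ j ∉ p.vars := by
  rw [← Nat.le_zero, degreeOf_le_iff]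
  simp only [Nat.le_zero, mem_vars, Finsupp.mem_support_iff, not_exists]
  constructor
  · rintro h m ⟨hm, hj⟩; exact hj (h m hm)
  · intro h m hm; by_contra hc; exact h m ⟨hm, hc⟩

lemma iterComp_tri (f : Fin N → MvPolynomial (Fin N) k)
    (hf : ∀ i j : Fin N, j < i → degreeOf j (f i) = 0) (n : ℕ) :
    ∀ i j : Fin N, j < i → degreeOf j (iterComp f n i) = 0 := by
  induction n with
  | zero =>
    intro i j hji
    rw [degreeOf_eq_zero_iff']
    show j ∉ (X i : MvPolynomial (Fin N) k).vars
    rw [vars_X]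
    simp [Finset.mem_singleton, hji.ne]
  | succ n ih =>
    intro i j hji
    rw [degreeOf_eq_zero_iff']
    intro hmem
    obtain ⟨m, hm, hmv⟩ := mem_vars_bind₁ _ _ hmem
    -- m ∈ vars (f i), j ∈ vars (iterComp f n m)
    have hmi : ¬ m < i := fun h => (degreeOf_eq_zero_iff'.mp (hf i m h)) hm
    have : ¬ j < m := fun h => (degreeOf_eq_zero_iff'.mp (ih m j h)) hmv
    exact this (lt_of_lt_of_le hji (not_lt.mp hmi))

lemma degreeOf_iterComp_diag {m : ℕ} (f : Fin (m+1) → MvPolynomial (Fin (m+1)) k)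
    (hf : ∀ i j : Fin (m+1), j < i → degreeOf j (f i) = 0)
    (hfind : AlgebraicIndependent k f) (i0 : Fin (m+1)) (n : ℕ) :
    degreeOf i0 (iterComp f n i0) = (degreeOf i0 (f i0)) ^ n := by
  classical
  set e : Equiv.Perm (Fin (m+1)) := Equiv.swap 0 i0 with he
  set u : MvPolynomial (Fin m) k →ₐ[k] MvPolynomial (Fin (m+1)) k :=
    rename (fun t : Fin m => e t.succ) with hu
  set Φ : MvPolynomial (Fin (m+1)) k →ₐ[k] Polynomial (MvPolynomial (Fin (m+1)) k) :=
    (Polynomial.mapAlgHom u).comp ((finSuccEquiv k m).toAlgHom.comp (rename e)) with hΦ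
  have hu_inj : Function.Injective u :=
    rename_injective _ (e.injective.comp (Fin.succ_injective _))
  have hΦX0 : Φ (X i0) = Polynomial.X := by
    simp only [hΦ, AlgHom.comp_apply, AlgEquiv.toAlgHom_eq_coe, AlgHom.coe_coe, rename_X]
    rw [he]
    rw [Equiv.swap_apply_right]
    erw [finSuccEquiv_X_zero]
    simp [Polynomial.mapAlgHom]
  have hΦX : ∀ j : Fin (m+1), j ≠ i0 → Φ (X j) = Polynomial.C (X j) := by
    intro j hj
    have hej : e j ≠ 0 := by
      simp [he, Equiv.swap_apply_eq_iff]
      simpa [Equiv.swap_apply_left] using hj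
    have hsp : ((e j).pred hej).succ = e j := Fin.succ_pred _ _
    simp only [hΦ, AlgHom.comp_apply, AlgEquiv.toAlgHom_eq_coe, AlgHom.coe_coe, rename_X]
    rw [← hsp]
    erw [finSuccEquiv_X_succ]
    simp [hu, Polynomial.mapAlgHom, Fin.succ_pred, he, Equiv.swap_apply_self]
  have hΦC : ∀ a : k, Φ (C a) = Polynomial.C (C a) := by
    intro a
    have h1 : (C a : MvPolynomial (Fin (m+1)) k) = algebraMap k _ a := rfl
    rw [h1, AlgHom.commutes]
    rfl
  have hdeg : ∀ q : MvPolynomial (Fin (m+1)) k, (Φ q).natDegree = degreeOf i0 q := by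
    intro q
    have h1 : (Φ q).natDegree = ((finSuccEquiv k m) (rename e q)).natDegree := by
      simp only [hΦ, AlgHom.comp_apply, AlgEquiv.toAlgHom_eq_coe, AlgHom.coe_coe]
      exact Polynomial.natDegree_map_eq_of_injective hu_inj _
    rw [h1, natDegree_finSuccEquiv]
    have := degreeOf_rename_of_injective (p := q) e.injective i0
    rw [← this, Equiv.swap_apply_right]
  have hsec : ∀ q : MvPolynomial (Fin (m+1)) k, Polynomial.eval (X i0) (Φ q) = q := by
    intro q
    have : (Polynomial.evalRingHom (X i0 : MvPolynomial (Fin (m+1)) k)).comp Φ.toRingHom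
        = RingHom.id _ := by
      apply ringHom_ext
      · intro a
        simp [hΦC a]
      · intro j
        rcases eq_or_ne j i0 with rfl | hj
        · simp [hΦX0]
        · simp [hΦX j hj]
    exact RingHom.congr_fun this q
  have hconst : ∀ q : MvPolynomial (Fin (m+1)) k, degreeOf i0 q = 0 →
      Φ q = Polynomial.C q := by
    intro q hq
    have h0 : (Φ q).natDegree = 0 := by rw [hdeg, hq]
    obtain ⟨a, ha⟩ := Polynomial.natDegree_eq_zero.mp h0
    have : a = q := by rw [← hsec q, ← ha, Polynomial.eval_C]
    rw [← ha, this]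
  induction n with
  | zero =>
    simp only [iterComp, pow_zero]
    simp [degreeOf_X]
  | succ n ih =>
    set g := iterComp f n with hg
    have hβinj : Function.Injective (aeval g : MvPolynomial (Fin (m+1)) k →ₐ[k] _) :=
      algebraicIndependent_iff_injective_aeval.mp (iterComp_indep f hfind n)
    set β : MvPolynomial (Fin (m+1)) k →+* MvPolynomial (Fin (m+1)) k :=
      (aeval g : MvPolynomial (Fin (m+1)) k →ₐ[k] _).toRingHom with hβ
    set P := Φ (g i0) with hP
    have key : Φ (iterComp f (n+1) i0)
        = Polynomial.eval₂ (Polynomial.C.comp β) P (Φ (f i0)) := by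
      have h2 := hom_congr_vars
        (f₁ := Φ.toRingHom.comp β)
        (f₂ := (Polynomial.eval₂RingHom (Polynomial.C.comp β) P).comp Φ.toRingHom)
        (p₁ := f i0) (p₂ := f i0) ?_ ?_ rfl
      · have h3 : Φ (aeval g (f i0)) = Polynomial.eval₂ (Polynomial.C.comp β) P (Φ (f i0)) := by
          exact h2
        rw [iterComp_succ]; exact h3
      · apply RingHom.ext; intro a
        simp [RingHom.comp_apply, hβ, aeval_C, algebraMap_eq, hΦC]
      · intro j hjv _
        have hji0 : ¬ j < i0 := fun hlt =>
          (degreeOf_eq_zero_iff'.mp (hf i0 j hlt)) hjv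
        rcases eq_or_ne j i0 with rfl | hj
        · simp [RingHom.comp_apply, hβ, hΦX0, Polynomial.coe_eval₂RingHom,
            Polynomial.eval₂_X, hP]
        · have hlt : i0 < j := lt_of_le_of_ne (not_lt.mp hji0) (Ne.symm hj)
          have htri : degreeOf i0 (g j) = 0 := iterComp_tri f hf n j i0 hlt
          simp only [RingHom.comp_apply, hβ, AlgHom.toRingHom_eq_coe, RingHom.coe_coe, aeval_X]
          rw [hconst (g j) htri, hΦX j hj]
          simp [Polynomial.coe_eval₂RingHom]
    have comp_eq : Polynomial.eval₂ (Polynomial.C.comp β) P (Φ (f i0))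
        = ((Φ (f i0)).map β).comp P := by
      rw [Polynomial.comp, Polynomial.eval₂_map]
    have : degreeOf i0 (iterComp f (n+1) i0)
        = (Φ (f i0)).natDegree * P.natDegree := by
      rw [← hdeg, key, comp_eq, Polynomial.natDegree_comp,
        Polynomial.natDegree_map_eq_of_injective hβinj]
    rw [this, hdeg, hP, hdeg, ih, pow_succ]
    ring

end Aux

section Aux2
variable {k : Type*} [Field k] {N : ℕ}

lemma totalDegree_aeval_le' (g : Fin N → MvPolynomial (Fin N) k)
    (p : MvPolynomial (Fin N) k) :
    (aeval g p).totalDegree ≤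
      p.support.sup (fun m => ∑ j, m j * (g j).totalDegree) := by
  conv_lhs => rw [p.as_sum, map_sum]
  refine (totalDegree_finset_sum _ _).trans ?_
  apply Finset.sup_le
  intro m hm
  refine le_trans ?_ (Finset.le_sup hm)
  rw [aeval_monomial]
  refine (totalDegree_mul _ _).trans ?_
  have h1 : (algebraMap k (MvPolynomial (Fin N) k) (coeff m p)).totalDegree = 0 :=
    totalDegree_C _
  rw [h1, zero_add]
  rw [Finsupp.prod]
  refine (totalDegree_finset_prod _ _).trans ?_
  refine le_trans (Finset.sum_le_sum fun j _ => totalDegree_pow (g j) (m j)) ?_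
  apply Finset.sum_le_sum_of_subset (Finset.subset_univ _)

lemma sum_le_totalDegree' {p : MvPolynomial (Fin N) k} {m : Fin N →₀ ℕ}
    (hm : m ∈ p.support) : ∑ j, m j ≤ p.totalDegree := by
  refine le_trans ?_ (le_totalDegree hm)
  rw [Finsupp.sum]
  rw [Finset.sum_subset (Finset.subset_univ m.support)]
  intro x _ hx
  exact Finsupp.notMem_support_iff.mp hx

end Aux2

section Aux3
variable {k : Type*} [Field k] {N : ℕ}

lemma iterComp_rec (f : Fin N → MvPolynomial (Fin N) k)
    (hf : ∀ i j : Fin N, j < i → degreeOf j (f i) = 0) (n : ℕ) (i : Fin N) :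
    (iterComp f (n+1) i).totalDegree ≤
      (Finset.univ.sup fun i' => degreeOf i' (f i')) * (iterComp f n i).totalDegree
      + (Finset.univ.sup fun i' => (f i').totalDegree) *
        ((Finset.univ.filter (fun j => i < j)).sup
          fun j => (iterComp f n j).totalDegree) := by
  classical
  set g := iterComp f n with hg
  set d := Finset.univ.sup fun i' => degreeOf i' (f i') with hd
  set M := Finset.univ.sup fun i' => (f i').totalDegree with hM
  set T := (Finset.univ.filter (fun j => i < j)).sup
      (fun j => (g j).totalDegree) with hT
  have : iterComp f (n+1) i = aeval g (f i) := rfl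
  rw [this]
  refine (totalDegree_aeval_le' g (f i)).trans ?_
  apply Finset.sup_le
  intro m hm
  have hzero : ∀ j, j < i → m j = 0 := by
    intro j hj
    exact Nat.le_zero.mp (degreeOf_le_iff.mp (hf i j hj).le m hm)
  set s := Finset.univ.filter (fun j => i < j) with hs
  have his : i ∉ s := by simp [hs]
  have hsplit : ∑ j, m j * (g j).totalDegree
      = m i * (g i).totalDegree + ∑ j ∈ s, m j * (g j).totalDegree := by
    have h1 : ∑ j ∈ insert i s, m j * (g j).totalDegree
        = m i * (g i).totalDegree + ∑ j ∈ s, m j * (g j).totalDegree :=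
      Finset.sum_insert his
    rw [← h1]
    refine (Finset.sum_subset (Finset.subset_univ _) ?_).symm
    intro x _ hx
    simp only [Finset.mem_insert, hs, Finset.mem_filter, Finset.mem_univ, true_and] at hx
    push_neg at hx
    have : x < i := lt_of_le_of_ne hx.2 hx.1
    rw [hzero x this, zero_mul]
  rw [hsplit]
  apply add_le_add
  · exact Nat.mul_le_mul
      (le_trans (monomial_le_degreeOf i hm)
        (Finset.le_sup (f := fun i' => degreeOf i' (f i')) (Finset.mem_univ i)))
      le_rfl
  · calc ∑ j ∈ s, m j * (g j).totalDegree
        ≤ ∑ j ∈ s, m j * T := by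
          refine Finset.sum_le_sum fun j hj => Nat.mul_le_mul le_rfl ?_
          exact Finset.le_sup (f := fun j => (iterComp f n j).totalDegree) hj
      _ = (∑ j ∈ s, m j) * T := by rw [Finset.sum_mul]
      _ ≤ M * T := by
          refine Nat.mul_le_mul ?_ le_rfl
          refine le_trans (Finset.sum_le_sum_of_subset (Finset.subset_univ s)) ?_
          exact le_trans (sum_le_totalDegree' hm)
            (Finset.le_sup (f := fun i' => (f i').totalDegree) (Finset.mem_univ i))

lemma iterComp_totalDegree_le (f : Fin N → MvPolynomial (Fin N) k)
    (hf : ∀ i j : Fin N, j < i → degreeOf j (f i) = 0)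
    (hd1 : 1 ≤ Finset.univ.sup fun i' => degreeOf i' (f i')) (n : ℕ) (i : Fin N) :
    (iterComp f n i).totalDegree ≤
      ((Finset.univ.sup fun i' => (f i').totalDegree) + 1) ^ (N - 1 - i.val)
        * (n+1) ^ (N - 1 - i.val)
        * (Finset.univ.sup fun i' => degreeOf i' (f i')) ^ n := by
  classical
  set d := Finset.univ.sup fun i' => degreeOf i' (f i') with hd
  set M := Finset.univ.sup fun i' => (f i').totalDegree with hM
  induction n generalizing i with
  | zero =>
    have h1 : (iterComp f 0 i).totalDegree = 1 := totalDegree_X i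
    rw [h1, pow_zero, mul_one]
    have : 0 < (M+1) ^ (N - 1 - i.val) * (0+1) ^ (N - 1 - i.val) := by positivity
    exact this
  | succ n ih =>
    have hrec := iterComp_rec f hf n i
    rw [← hd, ← hM] at hrec
    by_cases hE : N - 1 - i.val = 0
    · have hval : i.val = N - 1 := by have := i.isLt; omega
      have hfil : Finset.univ.filter (fun j => i < j) = ∅ := by
        rw [Finset.filter_eq_empty_iff]
        intro j _
        have hj := j.isLt
        have : j.val ≤ i.val := by omega
        exact not_lt.mpr this
      rw [hfil, Finset.sup_empty] at hrec
      have hrec2 : (iterComp f (n+1) i).totalDegree ≤ d * (iterComp f n i).totalDegree := by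
        simpa using hrec
      rw [hE]
      simp only [pow_zero, one_mul]
      have ihi := ih i
      rw [hE] at ihi
      simp only [pow_zero, one_mul] at ihi
      calc (iterComp f (n+1) i).totalDegree ≤ d * (iterComp f n i).totalDegree := hrec2
        _ ≤ d * d ^ n := Nat.mul_le_mul le_rfl ihi
        _ = d ^ (n+1) := by ring
    · obtain ⟨E', hE'⟩ : ∃ E', N - 1 - i.val = E' + 1 :=
        ⟨(N - 1 - i.val) - 1, by omega⟩
      have hT : ((Finset.univ.filter (fun j => i < j)).sup
          fun j => (iterComp f n j).totalDegree)
          ≤ (M+1) ^ E' * (n+1) ^ E' * d ^ n := by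
        apply Finset.sup_le
        intro j hj
        simp only [Finset.mem_filter, Finset.mem_univ, true_and] at hj
        have hij : i.val < j.val := hj
        have hle : N - 1 - j.val ≤ E' := by omega
        refine (ih j).trans ?_
        refine Nat.mul_le_mul (Nat.mul_le_mul ?_ ?_) le_rfl
        · exact Nat.pow_le_pow_right (by omega) hle
        · exact Nat.pow_le_pow_right (by omega) hle
      set T := (Finset.univ.filter (fun j => i < j)).sup
          (fun j => (iterComp f n j).totalDegree) with hTdef
      calc (iterComp f (n+1) i).totalDegree
          ≤ d * (iterComp f n i).totalDegree + M * T := hrec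
        _ ≤ d * ((M+1)^(N-1-i.val) * (n+1)^(N-1-i.val) * d^n)
            + M * ((M+1)^E' * (n+1)^E' * d^n) :=
              add_le_add (Nat.mul_le_mul le_rfl (ih i)) (Nat.mul_le_mul le_rfl hT)
        _ = (M+1)^(E'+1) * (n+1)^(E'+1) * d^(n+1)
            + M * ((M+1)^E' * (n+1)^E' * d^n) := by rw [hE']; ring
        _ ≤ (M+1)^(E'+1) * (n+1)^(E'+1) * d^(n+1)
            + (M+1) * ((M+1)^E' * (n+1)^E' * (d^n * d)) := by
              refine add_le_add le_rfl ?_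
              refine Nat.mul_le_mul (by omega) (Nat.mul_le_mul le_rfl ?_)
              exact Nat.le_mul_of_pos_right _ hd1
        _ = (M+1)^(E'+1) * d^(n+1) * ((n+1)^(E'+1) + (n+1)^E') := by ring
        _ ≤ (M+1)^(E'+1) * d^(n+1) * (n+2)^(E'+1) := by
              refine Nat.mul_le_mul le_rfl ?_
              calc (n+1)^(E'+1) + (n+1)^E' = (n+1)^E' * (n+2) := by ring
                _ ≤ (n+2)^E' * (n+2) :=
                    Nat.mul_le_mul (Nat.pow_le_pow_left (by omega) _) le_rfl
                _ = (n+2)^(E'+1) := by ring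
        _ = (M+1)^(N-1-i.val) * (n+1+1)^(N-1-i.val) * d^(n+1) := by rw [hE']; ring

end Aux3
section Final
variable {k : Type*} [Field k] {N : ℕ}

lemma one_le_sup_degreeOf (hN : 0 < N) (f : Fin N → MvPolynomial (Fin N) k)
    (hf : ∀ i j : Fin N, j < i → degreeOf j (f i) = 0)
    (hfind : AlgebraicIndependent k f) :
    1 ≤ Finset.univ.sup fun i => degreeOf i (f i) := by
  by_contra h
  push_neg at h
  have hall : ∀ i : Fin N, degreeOf i (f i) = 0 := by
    intro i
    have h0 : (Finset.univ.sup fun i => degreeOf i (f i)) = 0 := Nat.lt_one_iff.mp h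
    have := Finset.le_sup (f := fun i => degreeOf i (f i)) (Finset.mem_univ i)
    rw [h0] at this
    exact Nat.le_zero.mp this
  set iL : Fin N := ⟨N-1, by omega⟩ with hiL
  have hallj : ∀ j : Fin N, degreeOf j (f iL) = 0 := by
    intro j
    rcases lt_trichotomy j iL with hlt | heq | hgt
    · exact hf iL j hlt
    · rw [heq]; exact hall iL
    · exfalso
      have h1 := j.isLt
      have h2 : iL.val < j.val := hgt
      simp [hiL] at h2
      omega
  have hsupp : ∀ m ∈ (f iL).support, m = 0 := by
    intro m hm
    ext j
    exact Nat.le_zero.mp (degreeOf_le_iff.mp (hallj j).le m hm)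
  have hC : f iL = C (coeff 0 (f iL)) := by
    rcases Finset.eq_empty_or_nonempty (f iL).support with he | ⟨m0, hm0⟩
    · rw [support_eq_empty.mp he]; simp
    · have hsub : (f iL).support = {0} :=
        Finset.eq_singleton_iff_unique_mem.mpr ⟨hsupp m0 hm0 ▸ hm0, fun x hx => hsupp x hx⟩
      conv_lhs => rw [as_sum (f iL)]
      rw [hsub, Finset.sum_singleton, ← C_apply]
  have halg : IsAlgebraic k (f iL) := by
    rw [hC]
    have : (C (coeff 0 (f iL)) : MvPolynomial (Fin N) k)
        = algebraMap k (MvPolynomial (Fin N) k) (coeff 0 (f iL)) := rfl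
    rw [this]
    exact isAlgebraic_algebraMap _
  exact hfind.transcendental iL halg

end Final
/-- Let `f` be a triangular tuple of polynomials over a field `k` whose
components are algebraically independent over `k`. Writing
`deg(f^∘n) := max_j totalDegree((f^∘n)ⱼ)`, the limit `lim_n (deg(f^∘n))^(1/n)` exists and
equals `max_i deg_{xᵢ}(fᵢ)`. -/
theorem tendsto_root_deg_iterComp
    {k : Type*} [Field k] {N : ℕ} (hN : 0 < N)
    (f : Fin N → MvPolynomial (Fin N) k)
    (hf : ∀ i j : Fin N, j < i → degreeOf j (f i) = 0)
    (hfind : AlgebraicIndependent k f) :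
    Filter.Tendsto
      (fun n : ℕ =>
        ((Finset.univ.sup fun j : Fin N => (iterComp f n j).totalDegree : ℕ) : ℝ)
          ^ (1 / (n : ℝ)))
      Filter.atTop
      (nhds ((Finset.univ.sup fun i : Fin N => degreeOf i (f i) : ℕ) : ℝ)) := by
  classical
  obtain ⟨m, rfl⟩ : ∃ m, N = m + 1 := ⟨N - 1, by omega⟩
  set d : ℕ := Finset.univ.sup fun i : Fin (m+1) => degreeOf i (f i) with hd
  set M : ℕ := Finset.univ.sup fun i : Fin (m+1) => (f i).totalDegree with hM
  set S : ℕ → ℕ :=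
    fun n => Finset.univ.sup fun j : Fin (m+1) => (iterComp f n j).totalDegree with hS
  have hd1 : 1 ≤ d := one_le_sup_degreeOf hN f hf hfind
  obtain ⟨i0, -, hi0⟩ := Finset.exists_mem_eq_sup Finset.univ
    Finset.univ_nonempty (fun i : Fin (m+1) => degreeOf i (f i))
  have hlow : ∀ n, d ^ n ≤ S n := by
    intro n
    have h1 : degreeOf i0 (iterComp f n i0) = d ^ n := by
      rw [degreeOf_iterComp_diag f hf hfind i0 n, hd, hi0]
    calc d ^ n = degreeOf i0 (iterComp f n i0) := h1.symm
      _ ≤ (iterComp f n i0).totalDegree := degreeOf_le_totalDegree _ _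
      _ ≤ S n := Finset.le_sup (f := fun j => (iterComp f n j).totalDegree)
            (Finset.mem_univ i0)
  have hup : ∀ n, S n ≤ (M+1)^m * (n+1)^m * d^n := by
    intro n
    apply Finset.sup_le
    intro i _
    refine (iterComp_totalDegree_le f hf hd1 n i).trans ?_
    refine Nat.mul_le_mul (Nat.mul_le_mul (Nat.pow_le_pow_right (by omega) (by omega))
      (Nat.pow_le_pow_right (by omega) (by omega))) le_rfl
  have hS1 : ∀ n, 1 ≤ S n := fun n =>
    le_trans (Nat.one_le_pow n d (by omega)) (hlow n)
  have hSR : ∀ n, (1:ℝ) ≤ (S n : ℝ) := fun n => by exact_mod_cast hS1 n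
  have hdR : (1:ℝ) ≤ (d:ℝ) := by exact_mod_cast hd1
  have hdpos : (0:ℝ) < d := by linarith
  have hlog_up : ∀ n : ℕ, Real.log (S n)
      ≤ (m:ℝ) * Real.log ((M:ℝ)+1) + m * Real.log ((n:ℝ)+1) + n * Real.log d := by
    intro n
    have hle : (S n : ℝ) ≤ ((M:ℝ)+1)^m * ((n:ℝ)+1)^m * (d:ℝ)^n := by
      exact_mod_cast hup n
    have h1 : Real.log (S n) ≤ Real.log (((M:ℝ)+1)^m * ((n:ℝ)+1)^m * (d:ℝ)^n) :=
      (Real.log_le_log_iff (by linarith [hSR n])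
        (by positivity)).mpr hle
    rw [Real.log_mul (by positivity) (by positivity),
      Real.log_mul (by positivity) (by positivity),
      Real.log_pow, Real.log_pow, Real.log_pow] at h1
    linarith
  have hlog_low : ∀ n : ℕ, (n:ℝ) * Real.log d ≤ Real.log (S n) := by
    intro n
    have hle : ((d:ℝ))^n ≤ (S n : ℝ) := by exact_mod_cast hlow n
    have h1 : Real.log ((d:ℝ)^n) ≤ Real.log (S n) :=
      (Real.log_le_log_iff (pow_pos hdpos n) (by linarith [hSR n])).mpr hle
    rwa [Real.log_pow] at h1
  have hmain : Filter.Tendsto (fun n : ℕ => Real.log (S n) / n)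
      Filter.atTop (nhds (Real.log d)) := by
    have ht2 : Filter.Tendsto (fun n : ℕ => Real.log ((n:ℝ)+1) / n)
        Filter.atTop (nhds 0) := by
      have hb := Real.tendsto_pow_log_div_mul_add_atTop 1 (-1) 1 one_ne_zero
      have hcomp := hb.comp
        (Filter.tendsto_atTop_add_const_right Filter.atTop (1:ℝ)
          tendsto_natCast_atTop_atTop)
      refine hcomp.congr (fun n => ?_)
      simp only [Function.comp_apply, pow_one]
      congr 1
      ring
    have ht1 : Filter.Tendsto
        (fun n : ℕ => (m:ℝ) * Real.log ((M:ℝ)+1) / n) Filter.atTop (nhds 0) :=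
      tendsto_const_div_atTop_nhds_zero_nat _
    have hupper : Filter.Tendsto
        (fun n : ℕ => (m:ℝ) * Real.log ((M:ℝ)+1) / n
          + (m:ℝ) * (Real.log ((n:ℝ)+1) / n) + Real.log d)
        Filter.atTop (nhds (Real.log d)) := by
      have h3 := (ht1.add (ht2.const_mul (m:ℝ))).add_const (Real.log d)
      simpa using h3
    refine tendsto_of_tendsto_of_tendsto_of_le_of_le' tendsto_const_nhds hupper ?_ ?_
    · filter_upwards [Filter.eventually_ge_atTop 1] with n hn
      have hnpos : (0:ℝ) < n := by exact_mod_cast hn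
      rw [le_div_iff₀ hnpos]
      have := hlog_low n
      linarith
    · filter_upwards [Filter.eventually_ge_atTop 1] with n hn
      have hnpos : (0:ℝ) < n := by exact_mod_cast hn
      have heq : (m:ℝ) * Real.log ((M:ℝ)+1) / n + (m:ℝ) * (Real.log ((n:ℝ)+1) / n) + Real.log d
          = ((m:ℝ) * Real.log ((M:ℝ)+1) + (m:ℝ) * Real.log ((n:ℝ)+1) + n * Real.log d) / n := by
        field_simp
      rw [heq]
      exact (div_le_div_iff_of_pos_right hnpos).mpr (hlog_up n)
  have hfinal := (Real.continuous_exp.tendsto _).comp hmain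
  rw [Real.exp_log hdpos] at hfinal
  refine hfinal.congr (fun n => ?_)
  have hpos : (0:ℝ) < (S n : ℝ) := by linarith [hSR n]
  show Real.exp (Real.log (S n) / n) = (S n : ℝ) ^ (1 / (n:ℝ))
  rw [Real.rpow_def_of_pos hpos, mul_one_div]
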